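/- arXiv:2005.12578 — 3 statements merged into one kernel-verified Lean document; each statement's English description precedes it below -/
import Mathlib

section
/- The Lie algebra su(2) of traceless skew-Hermitian 2x2 complex matrices is spanned (over the reals) by the set of nested commutators {[X,[X,Y]] : X, Y in su(2)}. -/
open Matrix Complex

noncomputable def su2e1 : Matrix (Fin 2) (Fin 2) ℂ := !![Complex.I, 0; 0, -Complex.I]
noncomputable def su2e2 : Matrix (Fin 2) (Fin 2) ℂ := !![0, 1; -1, 0]
noncomputable def su2e3 : Matrix (Fin 2) (Fin 2) ℂ := !![0, Complex.I; Complex.I, 0]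

lemma su2e1_mem : su2e1.conjTranspose = -su2e1 ∧ su2e1.trace = 0 := by
  constructor
  · ext i j; fin_cases i <;> fin_cases j <;> simp [su2e1, conjTranspose_apply]
  · simp [su2e1, Matrix.trace_fin_two]

lemma su2e2_mem : su2e2.conjTranspose = -su2e2 ∧ su2e2.trace = 0 := by
  constructor
  · ext i j; fin_cases i <;> fin_cases j <;> simp [su2e2, conjTranspose_apply]
  · simp [su2e2, Matrix.trace_fin_two]

lemma su2e3_mem : su2e3.conjTranspose = -su2e3 ∧ su2e3.trace = 0 := by
  constructor
  · ext i j; fin_cases i <;> fin_cases j <;> simp [su2e3, conjTranspose_apply]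
  · simp [su2e3, Matrix.trace_fin_two]

lemma su2e1_eq : su2e1 = (-(4:ℝ))⁻¹ • ⁅su2e2, ⁅su2e2, su2e1⁆⁆ := by
  ext i j
  fin_cases i <;> fin_cases j <;>
    simp [su2e1, su2e2, Ring.lie_def, Matrix.mul_apply, Fin.sum_univ_two,
      Matrix.smul_apply, Complex.ext_iff] <;> norm_num

lemma su2e2_eq : su2e2 = (-(4:ℝ))⁻¹ • ⁅su2e1, ⁅su2e1, su2e2⁆⁆ := by
  ext i j
  fin_cases i <;> fin_cases j <;>
    simp [su2e1, su2e2, Ring.lie_def, Matrix.mul_apply, Fin.sum_univ_two,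
      Matrix.smul_apply, Complex.ext_iff] <;> norm_num

lemma su2e3_eq : su2e3 = (-(4:ℝ))⁻¹ • ⁅su2e1, ⁅su2e1, su2e3⁆⁆ := by
  ext i j
  fin_cases i <;> fin_cases j <;>
    simp [su2e1, su2e3, Ring.lie_def, Matrix.mul_apply, Fin.sum_univ_two,
      Matrix.smul_apply, Complex.ext_iff] <;> norm_num

/-- `su(2)`, the traceless skew-Hermitian 2×2 complex matrices, is (as a set) the real
linear span of the nested commutators `[X,[X,Y]]` with `X, Y ∈ su(2)`. -/
theorem stmt_5 :
    let su2 : Set (Matrix (Fin 2) (Fin 2) ℂ) :=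
      {X | X.conjTranspose = -X ∧ X.trace = 0}
    (Submodule.span ℝ {Z : Matrix (Fin 2) (Fin 2) ℂ |
        ∃ X ∈ su2, ∃ Y ∈ su2, Z = ⁅X, ⁅X, Y⁆⁆} : Set (Matrix (Fin 2) (Fin 2) ℂ))
      = su2 := by
  intro su2
  have bracket_mem : ∀ X ∈ su2, ∀ Y ∈ su2, ⁅X, Y⁆ ∈ su2 := by
    rintro X ⟨hX1, hX2⟩ Y ⟨hY1, hY2⟩
    constructor
    · simp only [Ring.lie_def, conjTranspose_sub, conjTranspose_mul, hX1, hY1]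
      noncomm_ring
    · simp [Ring.lie_def, Matrix.trace_sub, Matrix.trace_mul_comm X Y]
  -- su2 as a submodule
  let su2M : Submodule ℝ (Matrix (Fin 2) (Fin 2) ℂ) :=
    { carrier := su2
      add_mem' := by
        rintro a b ⟨ha1, ha2⟩ ⟨hb1, hb2⟩
        exact ⟨by rw [conjTranspose_add, ha1, hb1, neg_add], by simp [ha2, hb2]⟩
      zero_mem' := by constructor <;> simp
      smul_mem' := by
        rintro c x ⟨hx1, hx2⟩
        constructor
        · rw [conjTranspose_smul, hx1]; simp
        · simp [hx2] }
  apply le_antisymm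
  · have hle : Submodule.span ℝ {Z : Matrix (Fin 2) (Fin 2) ℂ |
        ∃ X ∈ su2, ∃ Y ∈ su2, Z = ⁅X, ⁅X, Y⁆⁆} ≤ su2M := by
      apply Submodule.span_le.mpr
      rintro Z ⟨X, hX, Y, hY, rfl⟩
      exact bracket_mem X hX _ (bracket_mem X hX Y hY)
    exact fun x hx => hle hx
  · intro X hX
    obtain ⟨hX1, hX2⟩ := hX
    set S := {Z : Matrix (Fin 2) (Fin 2) ℂ | ∃ X ∈ su2, ∃ Y ∈ su2, Z = ⁅X, ⁅X, Y⁆⁆}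
    have he1 : su2e1 ∈ Submodule.span ℝ S := by
      rw [su2e1_eq]
      exact Submodule.smul_mem _ _ (Submodule.subset_span
        ⟨su2e2, su2e2_mem, su2e1, su2e1_mem, rfl⟩)
    have he2 : su2e2 ∈ Submodule.span ℝ S := by
      rw [su2e2_eq]
      exact Submodule.smul_mem _ _ (Submodule.subset_span
        ⟨su2e1, su2e1_mem, su2e2, su2e2_mem, rfl⟩)
    have he3 : su2e3 ∈ Submodule.span ℝ S := by
      rw [su2e3_eq]
      exact Submodule.smul_mem _ _ (Submodule.subset_span
        ⟨su2e1, su2e1_mem, su2e3, su2e3_mem, rfl⟩)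
    have hdecomp : X = (X 0 0).im • su2e1 + (X 0 1).re • su2e2 + (X 0 1).im • su2e3 := by
      have c00 := congrFun (congrFun hX1 0) 0
      have c10 := congrFun (congrFun hX1 0) 1
      simp only [conjTranspose_apply, Matrix.neg_apply, Complex.ext_iff, Complex.star_def,
        Complex.conj_re, Complex.conj_im, Complex.neg_re, Complex.neg_im] at c00 c10
      have htr : X 1 1 = -X 0 0 := by
        have h : X 0 0 + X 1 1 = 0 := by simpa [Matrix.trace_fin_two] using hX2
        linear_combination h
      ext i j
      fin_cases i <;> fin_cases j <;>
        · simp only [Matrix.add_apply, Matrix.smul_apply, su2e1, su2e2, su2e3, htr,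
            Matrix.cons_val', Matrix.cons_val_zero, Matrix.cons_val_one, Matrix.head_cons,
            Matrix.head_fin_const, Matrix.empty_val', Matrix.cons_val_fin_one,
            Complex.ext_iff, Complex.add_re, Complex.add_im, Complex.neg_re, Complex.neg_im,
            Complex.real_smul, Complex.mul_re, Complex.mul_im, Complex.ofReal_re,
            Complex.ofReal_im, Complex.I_re, Complex.I_im, Complex.one_re, Complex.one_im,
            Complex.zero_re, Complex.zero_im, Fin.mk_zero, Fin.mk_one, Fin.isValue,
            Matrix.cons_val_zero, Matrix.cons_val_one, Matrix.head_cons, Matrix.head_fin_const,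
            Matrix.of_apply, Matrix.cons_val', Matrix.empty_val', Matrix.cons_val_fin_one,
            Complex.I_re, Complex.I_im, Complex.one_re, Complex.one_im, neg_neg,
            mul_zero, mul_one, zero_mul, add_zero, zero_add, sub_zero, mul_neg, neg_zero]
          try constructor
          all_goals first | trivial | linarith [c00.1, c00.2, c10.1, c10.2]
    rw [hdecomp]
    exact Submodule.add_mem _ (Submodule.add_mem _
      (Submodule.smul_mem _ _ he1) (Submodule.smul_mem _ _ he2))
      (Submodule.smul_mem _ _ he3)
end

section
/- For every n ≥ 2, the Lie algebra su(n) is the real linear span of the set of nested commutators {[A,[A,B]] : A, B in su(n)}. -/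
open Matrix

namespace Stmt6

variable {n : ℕ}

noncomputable def E (a b : Fin n) : Matrix (Fin n) (Fin n) ℂ := single a b 1

lemma E_mul_same (a b c : Fin n) : E a b * E b c = E a c := by simp [E]

lemma E_mul_ne {b c : Fin n} (h : b ≠ c) (a d : Fin n) : E a b * E c d = 0 := by
  unfold E; exact single_mul_single_of_ne (h := h) ..

lemma E_conjT (a b : Fin n) : (E a b)ᴴ = E b a := by
  ext p q
  simp only [E, conjTranspose_apply, single, of_apply]
  split_ifs with h1 h2 h2 <;> simp_all <;> tauto

noncomputable def eU (j k : Fin n) : Matrix (Fin n) (Fin n) ℂ := Complex.I • (E j k + E k j)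
noncomputable def eV (j k : Fin n) : Matrix (Fin n) (Fin n) ℂ := E j k - E k j
noncomputable def eD (j k : Fin n) : Matrix (Fin n) (Fin n) ℂ := Complex.I • (E j j - E k k)

lemma id1 {j k : Fin n} (h : j ≠ k) : ⁅eV j k, ⁅eV j k, eU j k⁆⁆ = (-4:ℝ) • eU j k := by
  simp only [eU, eV, Ring.lie_def, smul_sub, smul_add, mul_smul_comm, smul_mul_assoc,
    sub_mul, mul_sub, add_mul, mul_add, E_mul_same, E_mul_ne h, E_mul_ne h.symm,
    neg_mul, mul_neg, neg_neg, smul_neg, smul_zero, zero_mul, mul_zero, zero_sub, sub_zero,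
    zero_add, add_zero, sub_neg_eq_add, neg_sub]
  module

lemma id2 {j k : Fin n} (h : j ≠ k) : ⁅eU j k, ⁅eU j k, eV j k⁆⁆ = (-4:ℝ) • eV j k := by
  simp only [eU, eV, Ring.lie_def, smul_sub, smul_add, mul_smul_comm, smul_mul_assoc,
    sub_mul, mul_sub, add_mul, mul_add, E_mul_same, E_mul_ne h, E_mul_ne h.symm,
    neg_mul, mul_neg, neg_neg, smul_neg, smul_zero, zero_mul, mul_zero, zero_sub, sub_zero,
    zero_add, add_zero, sub_neg_eq_add, neg_sub]
  simp only [smul_smul, Complex.I_mul_I]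
  module

lemma id3 {j k : Fin n} (h : j ≠ k) : ⁅eU j k, ⁅eU j k, eD j k⁆⁆ = (-4:ℝ) • eD j k := by
  simp only [eU, eD, Ring.lie_def, smul_sub, smul_add, mul_smul_comm, smul_mul_assoc,
    sub_mul, mul_sub, add_mul, mul_add, E_mul_same, E_mul_ne h, E_mul_ne h.symm,
    neg_mul, mul_neg, neg_neg, smul_neg, smul_zero, zero_mul, mul_zero, zero_sub, sub_zero,
    zero_add, add_zero, sub_neg_eq_add, neg_sub]
  simp only [smul_smul, Complex.I_mul_I]
  module

lemma eU_mem {j k : Fin n} (h : j ≠ k) : (eU j k)ᴴ = -(eU j k) ∧ (eU j k).trace = 0 := by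
  constructor
  · rw [eU, conjTranspose_smul, conjTranspose_add, E_conjT, E_conjT]
    simp only [Complex.star_def, Complex.conj_I]
    module
  · rw [eU, trace_smul]
    unfold E
    rw [trace_add, trace_single_eq_of_ne _ _ _ h, trace_single_eq_of_ne _ _ _ h.symm]
    simp

lemma eV_mem {j k : Fin n} (h : j ≠ k) : (eV j k)ᴴ = -(eV j k) ∧ (eV j k).trace = 0 := by
  constructor
  · rw [eV, conjTranspose_sub, E_conjT, E_conjT]; module
  · rw [eV]
    unfold E
    rw [trace_sub, trace_single_eq_of_ne _ _ _ h, trace_single_eq_of_ne _ _ _ h.symm]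
    simp

lemma eD_mem {j k : Fin n} (h : j ≠ k) : (eD j k)ᴴ = -(eD j k) ∧ (eD j k).trace = 0 := by
  constructor
  · rw [eD, conjTranspose_smul, conjTranspose_sub, E_conjT, E_conjT]
    simp only [Complex.star_def, Complex.conj_I]
    module
  · rw [eD, trace_smul]
    unfold E
    rw [trace_sub, trace_single_eq_same, trace_single_eq_same]
    simp

lemma zdecomp {j k : Fin n} (h : j ≠ k) (z : ℂ) :
    z.re • eV j k + z.im • eU j k
      = single j k z + single k j (-(starRingEnd ℂ) z) := by
  ext p q
  simp only [eV, eU, E, Matrix.add_apply, Matrix.smul_apply, Matrix.sub_apply, single, of_apply,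
    smul_eq_mul, Complex.real_smul]
  split_ifs with h1 h2 h2 <;>
    [skip; skip; skip; skip] <;>
    first
      | (exact absurd (h1.1.symm.trans h2.1).symm (by simp_all))
      | (simp_all; simp [Complex.ext_iff]; try ring)
      | simp_all

lemma sum_E_diag : (∑ i : Fin n, E i i) = (1 : Matrix (Fin n) (Fin n) ℂ) := by
  ext p q
  rw [Matrix.sum_apply]
  by_cases h : p = q
  · subst h
    rw [Finset.sum_eq_single p]
    · simp [E]
    · intro b _ hb; simp [E, hb]
    · simp
  · rw [Finset.sum_eq_zero]
    · simp [Matrix.one_apply, h]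
    · intro i _
      rcases eq_or_ne i p with rfl | hip
      · simp [E, h]
      · simp [E, hip]

end Stmt6

open Stmt6 Matrix in
/-- For every `n ≥ 2`, `su(n)` (traceless skew-Hermitian `n×n` complex matrices) is, as a
set, the real linear span of the nested commutators `[A,[A,B]]` with `A, B ∈ su(n)`. -/
theorem stmt_6 (n : ℕ) (hn : 2 ≤ n) :
    let su : Set (Matrix (Fin n) (Fin n) ℂ) :=
      {X | X.conjTranspose = -X ∧ X.trace = 0}
    (Submodule.span ℝ {Z : Matrix (Fin n) (Fin n) ℂ |
        ∃ A ∈ su, ∃ B ∈ su, Z = ⁅A, ⁅A, B⁆⁆} : Set (Matrix (Fin n) (Fin n) ℂ))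
      = su := by
  intro su
  have skewlie : ∀ X Y : Matrix (Fin n) (Fin n) ℂ, Xᴴ = -X → Yᴴ = -Y → ⁅X, Y⁆ᴴ = -⁅X, Y⁆ := by
    intro X Y hX hY
    simp only [Ring.lie_def, conjTranspose_sub, conjTranspose_mul, hX, hY]
    noncomm_ring
  have trlie : ∀ X Y : Matrix (Fin n) (Fin n) ℂ, (⁅X, Y⁆).trace = 0 := by
    intro X Y
    rw [Ring.lie_def, trace_sub, trace_mul_comm, sub_self]
  apply Set.Subset.antisymm
  · intro x hx
    induction hx using Submodule.span_induction with
    | mem z hz =>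
      obtain ⟨A, hA, B, hB, rfl⟩ := hz
      exact ⟨skewlie _ _ hA.1 (skewlie _ _ hA.1 hB.1), trlie _ _⟩
    | zero => exact ⟨by simp, by simp⟩
    | add a b _ _ ha hb =>
      exact ⟨by rw [conjTranspose_add, ha.1, hb.1, neg_add], by rw [trace_add, ha.2, hb.2, add_zero]⟩
    | smul c a _ ha =>
      constructor
      · rw [conjTranspose_smul, ha.1]
        simp
      · rw [trace_smul, ha.2, smul_zero]
  · intro X hX
    set K := Submodule.span ℝ {Z : Matrix (Fin n) (Fin n) ℂ |
        ∃ A ∈ su, ∃ B ∈ su, Z = ⁅A, ⁅A, B⁆⁆} with hK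
    show X ∈ K
    obtain ⟨hX1, hX2⟩ := hX
    have hgen : ∀ A, A ∈ su → ∀ B, B ∈ su → ⁅A, ⁅A, B⁆⁆ ∈ K :=
      fun A hA B hB => Submodule.subset_span ⟨A, hA, B, hB, rfl⟩
    have hUK : ∀ j k : Fin n, j ≠ k → eU j k ∈ K := by
      intro j k h
      have e : eU j k = (-(1/4) : ℝ) • ((-4:ℝ) • eU j k) := by
        rw [smul_smul]; norm_num
      rw [e, ← id1 h]
      exact K.smul_mem _ (hgen _ (eV_mem h) _ (eU_mem h))
    have hVK : ∀ j k : Fin n, j ≠ k → eV j k ∈ K := by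
      intro j k h
      have e : eV j k = (-(1/4) : ℝ) • ((-4:ℝ) • eV j k) := by
        rw [smul_smul]; norm_num
      rw [e, ← id2 h]
      exact K.smul_mem _ (hgen _ (eU_mem h) _ (eV_mem h))
    have hDK : ∀ j k : Fin n, j ≠ k → eD j k ∈ K := by
      intro j k h
      have e : eD j k = (-(1/4) : ℝ) • ((-4:ℝ) • eD j k) := by
        rw [smul_smul]; norm_num
      rw [e, ← id3 h]
      exact K.smul_mem _ (hgen _ (eU_mem h) _ (eD_mem h))
    -- skewness of entries
    have hsk : ∀ p q : Fin n, X q p = -(starRingEnd ℂ) (X p q) := by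
      intro p q
      have h1 : (starRingEnd ℂ) (X q p) = -(X p q) := by
        have := congrFun (congrFun hX1 p) q
        rwa [conjTranspose_apply, neg_apply] at this
      have := congrArg (starRingEnd ℂ) h1
      rwa [Complex.conj_conj, map_neg] at this
    have hdiag' : ∀ j : Fin n, ((X j j).im : ℂ) * Complex.I = X j j := by
      intro j
      have h1 := hsk j j
      have hre : (X j j).re = 0 := by
        have := congrArg Complex.re h1
        simp at this
        linarith
      simp [Complex.ext_iff, hre]
    -- the decomposition pieces
    set G : Fin n → Fin n → Matrix (Fin n) (Fin n) ℂ := fun j k =>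
      (1/2 : ℝ) • (single j k (X j k) + single k j (X k j))
        + ((n:ℝ)⁻¹ * (X j j).im) • eD j k with hG
    set T : Fin n → Fin n → Matrix (Fin n) (Fin n) ℂ := fun j k =>
      if j = k then 0 else G j k with hT
    have hTmem : ∀ j k, T j k ∈ K := by
      intro j k
      rw [hT]
      by_cases h : j = k
      · simp only [if_pos h]; exact K.zero_mem
      · simp only [if_neg h]
        apply K.add_mem
        · have : single j k (X j k) + single k j (X k j)
              = (X j k).re • eV j k + (X j k).im • eU j k := by
            rw [zdecomp h, hsk j k]
          rw [this]
          exact K.smul_mem _ (K.add_mem (K.smul_mem _ (hVK _ _ h)) (K.smul_mem _ (hUK _ _ h)))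
        · exact K.smul_mem _ (hDK _ _ h)
    -- the sum identity
    have hn0 : (n:ℝ) ≠ 0 := by positivity
    have hIE : ∀ j : Fin n, (X j j).im • (Complex.I • E j j) = single j j (X j j) := by
      intro j
      rw [E, smul_single, smul_single, smul_eq_mul, mul_one,
        Complex.real_smul, hdiag']
    have sum_eD : ∀ j : Fin n, ∑ k : Fin n, eD j k = (n:ℝ) • (Complex.I • E j j) - Complex.I • 1 := by
      intro j
      have h1 : ∑ k : Fin n, eD j k
          = (∑ k : Fin n, Complex.I • E j j) - Complex.I • ∑ k : Fin n, E k k := by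
        rw [Finset.smul_sum, ← Finset.sum_sub_distrib]
        exact Finset.sum_congr rfl (fun k _ => by rw [eD, smul_sub])
      rw [h1, sum_E_diag, Finset.sum_const, Finset.card_univ, Fintype.card_fin,
        Nat.cast_smul_eq_nsmul]
    have hBj : ∀ j : Fin n, ∑ k : Fin n, G j k
        = (1/2:ℝ) • ((∑ k : Fin n, single j k (X j k))
            + (∑ k : Fin n, single k j (X k j)))
          + (single j j (X j j)
            - ((n:ℝ)⁻¹ * (X j j).im) • (Complex.I • (1 : Matrix (Fin n) (Fin n) ℂ))) := by
      intro j
      rw [hG]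
      rw [Finset.sum_add_distrib, ← Finset.smul_sum, ← Finset.smul_sum, Finset.sum_add_distrib,
        sum_eD j, smul_sub, smul_smul]
      have h1 : (n:ℝ)⁻¹ * (X j j).im * (n:ℝ) = (X j j).im := by field_simp
      rw [h1, hIE j]
    have keysum : ∑ j : Fin n, ∑ k : Fin n, T j k = X := by
      have e1 : ∀ j : Fin n, ∑ k : Fin n, T j k = (∑ k : Fin n, G j k) - G j j := by
        intro j
        have hTG : ∀ k, T j k = G j k - (if j = k then G j k else 0) := by
          intro k
          by_cases hjk : j = k
          · simp [hT, hjk]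
          · simp [hT, hjk]
        rw [Finset.sum_congr rfl (fun k _ => hTG k), Finset.sum_sub_distrib,
          Finset.sum_ite_eq]
        simp
      have hGjj : ∀ j : Fin n, G j j = single j j (X j j) := by
        intro j
        rw [hG]
        simp only [eD, sub_self, smul_zero, add_zero]
        module
      rw [Finset.sum_congr rfl (fun j _ => e1 j), Finset.sum_sub_distrib,
        Finset.sum_congr rfl (fun j _ => hBj j),
        Finset.sum_congr rfl (fun j _ => hGjj j)]
      rw [Finset.sum_add_distrib, ← Finset.smul_sum, Finset.sum_add_distrib,
        Finset.sum_sub_distrib]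
      have hA1 : ∑ j : Fin n, ∑ k : Fin n, single j k (X j k) = X :=
        (matrix_eq_sum_single X).symm
      have hA2 : ∑ j : Fin n, ∑ k : Fin n, single k j (X k j) = X := by
        rw [Finset.sum_comm]
        exact (matrix_eq_sum_single X).symm
      have hC : ∑ j : Fin n, ((n:ℝ)⁻¹ * (X j j).im) • (Complex.I • (1 : Matrix (Fin n) (Fin n) ℂ))
          = 0 := by
        rw [← Finset.sum_smul]
        have : ∑ j : Fin n, (n:ℝ)⁻¹ * (X j j).im = 0 := by
          rw [← Finset.mul_sum, ← Complex.im_sum]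
          have htr : ∑ j : Fin n, X j j = 0 := hX2
          rw [htr]
          simp
        rw [this, zero_smul]
      rw [hA1, hA2, hC]
      module
    rw [← keysum]
    exact Submodule.sum_mem K (fun j _ => Submodule.sum_mem K (fun k _ => hTmem j k))
end

section
/- Let g be the Lie algebra of a compact connected matrix Lie group and suppose g has trivial centre. Then g equals the real linear span of the set {[X,[X,Y]] : X, Y in g}. -/
/-- Let `g` be the Lie algebra of a compact connected matrix Lie group (encoded by the
existence of an ad-invariant positive definite symmetric real bilinear form on the
finite-dimensional real Lie algebra `g`) with trivial centre. Then `g` equals the real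
linear span of the nested commutators `[X,[X,Y]]`, `X, Y ∈ g`. -/
theorem stmt_9 (L : Type*) [LieRing L] [LieAlgebra ℝ L] [Module.Finite ℝ L]
    (Φ : L →ₗ[ℝ] L →ₗ[ℝ] ℝ)
    (hsymm : ∀ x y : L, Φ x y = Φ y x)
    (hpos : ∀ x : L, x ≠ 0 → 0 < Φ x x)
    (hinv : ∀ x y z : L, Φ ⁅z, x⁆ y + Φ x ⁅z, y⁆ = 0)
    (hcentre : LieAlgebra.center ℝ L = ⊥) :
    Submodule.span ℝ {z : L | ∃ X Y : L, z = ⁅X, ⁅X, Y⁆⁆} = ⊤ := by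
  have : FiniteDimensional ℝ L := inferInstance
  -- nondegeneracy
  have hnd : ∀ w : L, (∀ y : L, Φ w y = 0) → w = 0 := by
    intro w hw
    by_contra h
    exact absurd (hw w) (ne_of_gt (hpos w h))
  by_contra hne
  obtain ⟨f, hf0, hfbot⟩ :=
    Submodule.exists_dual_map_eq_bot_of_lt_top
      (p := Submodule.span ℝ {z : L | ∃ X Y : L, z = ⁅X, ⁅X, Y⁆⁆})
      (lt_top_iff_ne_top.mpr hne) inferInstance
  -- Φ : L →ₗ Dual L is surjective
  have hinj : Function.Injective (Φ : L →ₗ[ℝ] Module.Dual ℝ L) := by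
    intro a b hab
    have h1 : ∀ y, Φ (a - b) y = 0 := by
      intro y
      have : Φ a y = Φ b y := by rw [hab]
      simp [this]
    have := hnd _ h1
    exact sub_eq_zero.mp this
  have hsurj : Function.Surjective (Φ : L →ₗ[ℝ] Module.Dual ℝ L) :=
    (LinearMap.injective_iff_surjective_of_finrank_eq_finrank
      (Subspace.dual_finrank_eq).symm).mp hinj
  obtain ⟨w, hw⟩ := hsurj f
  -- f vanishes on the span, so Φ w ⁅X,⁅X,Y⁆⁆ = 0 for all X Y
  have hvanish : ∀ X Y : L, Φ w ⁅X, ⁅X, Y⁆⁆ = 0 := by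
    intro X Y
    have hmem : ⁅X, ⁅X, Y⁆⁆ ∈ Submodule.span ℝ {z : L | ∃ X Y : L, z = ⁅X, ⁅X, Y⁆⁆} :=
      Submodule.subset_span ⟨X, Y, rfl⟩
    have : f ⁅X, ⁅X, Y⁆⁆ ∈
        (Submodule.span ℝ {z : L | ∃ X Y : L, z = ⁅X, ⁅X, Y⁆⁆}).map f :=
      Submodule.mem_map_of_mem hmem
    rw [hfbot] at this
    rw [hw]
    simpa using this
  -- (ad X)^2 w = 0 for all X
  have had2 : ∀ X : L, ⁅X, ⁅X, w⁆⁆ = 0 := by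
    intro X
    apply hnd
    intro Y
    have h1 := hinv ⁅X, w⁆ Y X
    have h2 := hinv w ⁅X, Y⁆ X
    have := hvanish X Y
    linarith
  -- ⁅X, w⁆ = 0 for all X
  have hadw : ∀ X : L, ⁅X, w⁆ = 0 := by
    intro X
    by_contra h
    have h1 := hinv w ⁅X, w⁆ X
    rw [had2 X] at h1
    simp at h1
    exact absurd h1 (ne_of_gt (hpos _ h))
  -- w ∈ center, so w = 0
  have hwc : w ∈ LieAlgebra.center ℝ L := fun X => hadw X
  rw [hcentre] at hwc
  have : w = 0 := by simpa using hwc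
  rw [this] at hw
  rw [← hw] at hf0
  simp at hf0
end
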